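/- Let ξ(x) = Σ_{p≥2} c_p² x^p with nonnegative coefficients, ξ(1)=1, ξ ≠ x². Then for every q ∈ (0,1), ξ'(q)(1−q) − 1 + ξ(q) < 0. -/

import Mathlib

lemma key_ineq (q : ℝ) (hq0 : 0 < q) (hq1 : q < 1) :
    ∀ p : ℕ, 2 ≤ p → (p : ℝ) * q ^ (p - 1) * (1 - q) + q ^ p < 1 := by
  intro p hp
  induction p, hp using Nat.le_induction with
  | base => norm_num; nlinarith
  | succ p hp ih =>
    have ha : 0 < q ^ (p - 1) := pow_pos hq0 _
    have h1 : q ^ p = q ^ (p - 1) * q := by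
      rw [← pow_succ]; congr 1; omega
    have h2 : q ^ (p + 1) = q ^ (p - 1) * q * q := by
      rw [← pow_succ, ← pow_succ]; congr 1; omega
    have hp2 : (2 : ℝ) ≤ (p : ℝ) := by exact_mod_cast hp
    push_cast
    rw [h2, h1]
    rw [h1] at ih
    nlinarith [mul_nonneg ha.le (sq_nonneg (1 - q)), sq_nonneg (1 - q)]

theorem f2_at_infty_neg
    (c : ℕ → ℝ) (hc : ∀ p, 0 ≤ c p) (hc0 : c 0 = 0) (hc1 : c 1 = 0)
    (hsum : Summable (fun p : ℕ => (2 : ℝ) ^ p * c p))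
    (hnorm : (∑' p : ℕ, c p) = 1)
    (hne : ∃ p : ℕ, 3 ≤ p ∧ 0 < c p)
    (xi xi' : ℝ → ℝ)
    (hxi : ∀ x : ℝ, xi x = ∑' p : ℕ, c p * x ^ p)
    (hxi' : ∀ x : ℝ, xi' x = ∑' p : ℕ, (p : ℝ) * c p * x ^ (p - 1)) :
    ∀ q : ℝ, 0 < q → q < 1 → xi' q * (1 - q) - 1 + xi q < 0 := by
  intro q hq0 hq1
  obtain ⟨p₀, hp₀3, hcp₀⟩ := hne
  have hq0' : (0:ℝ) ≤ q := hq0.le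
  have hq1' : q ≤ 1 := hq1.le
  have hone : ∀ p : ℕ, (1:ℝ) ≤ 2 ^ p := fun p => one_le_pow₀ (by norm_num)
  have hSc : Summable c := by
    apply Summable.of_nonneg_of_le hc (fun p => ?_) hsum
    calc c p = 1 * c p := (one_mul _).symm
    _ ≤ 2 ^ p * c p := mul_le_mul_of_nonneg_right (hone p) (hc p)
  have hSphi : Summable (fun p : ℕ => c p * q ^ p) := by
    apply Summable.of_nonneg_of_le (fun p => mul_nonneg (hc p) (pow_nonneg hq0' p))
      (fun p => ?_) hsum
    calc c p * q ^ p ≤ c p * 1 :=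
          mul_le_mul_of_nonneg_left (pow_le_one₀ hq0' hq1') (hc p)
    _ = 1 * c p := by ring
    _ ≤ 2 ^ p * c p := mul_le_mul_of_nonneg_right (hone p) (hc p)
  have hSder : Summable (fun p : ℕ => (p : ℝ) * c p * q ^ (p - 1)) := by
    apply Summable.of_nonneg_of_le
      (fun p => mul_nonneg (mul_nonneg (Nat.cast_nonneg p) (hc p)) (pow_nonneg hq0' _))
      (fun p => ?_) hsum
    have h2 : (p : ℝ) ≤ 2 ^ p := by exact_mod_cast (Nat.lt_two_pow_self (n := p)).le
    calc (p : ℝ) * c p * q ^ (p - 1) ≤ (p : ℝ) * c p * 1 :=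
          mul_le_mul_of_nonneg_left (pow_le_one₀ hq0' hq1')
            (mul_nonneg (Nat.cast_nonneg p) (hc p))
    _ = (p : ℝ) * c p := mul_one _
    _ ≤ 2 ^ p * c p := mul_le_mul_of_nonneg_right h2 (hc p)
  set T : ℕ → ℝ := fun p => (p : ℝ) * c p * q ^ (p - 1) * (1 - q) + c p * q ^ p - c p
    with hT
  have hSadd : Summable (fun p : ℕ => (p : ℝ) * c p * q ^ (p - 1) * (1 - q) + c p * q ^ p) :=
    (hSder.mul_right (1 - q)).add hSphi
  have hST : Summable T := hSadd.sub hSc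
  have e1 : ∑' p, T p = (∑' p : ℕ, ((p : ℝ) * c p * q ^ (p - 1) * (1 - q) + c p * q ^ p))
      - ∑' p, c p := Summable.tsum_sub hSadd hSc
  have e2 : (∑' p : ℕ, ((p : ℝ) * c p * q ^ (p - 1) * (1 - q) + c p * q ^ p))
      = (∑' p : ℕ, (p : ℝ) * c p * q ^ (p - 1) * (1 - q)) + ∑' p, c p * q ^ p :=
    Summable.tsum_add (hSder.mul_right (1 - q)) hSphi
  have e3 : (∑' p : ℕ, (p : ℝ) * c p * q ^ (p - 1) * (1 - q))
      = (∑' p : ℕ, (p : ℝ) * c p * q ^ (p - 1)) * (1 - q) := tsum_mul_right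
  have hEq : xi' q * (1 - q) - 1 + xi q = ∑' p, T p := by
    rw [hxi, hxi', e1, e2, e3, hnorm]; ring
  rw [hEq]
  have hTle : ∀ p, T p ≤ 0 := by
    intro p
    match p with
    | 0 => simp [hT, hc0]
    | 1 => simp [hT, hc1]
    | (n + 2) =>
      have h := key_ineq q hq0 hq1 (n + 2) (by omega)
      have hb : T (n + 2) = c (n + 2) *
          (((n + 2 : ℕ) : ℝ) * q ^ (n + 2 - 1) * (1 - q) + q ^ (n + 2) - 1) := by
        simp only [hT]; ring
      rw [hb]
      have : ((n + 2 : ℕ) : ℝ) * q ^ (n + 2 - 1) * (1 - q) + q ^ (n + 2) - 1 ≤ 0 := by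
        linarith
      exact mul_nonpos_of_nonneg_of_nonpos (hc _) this
  have hTlt : T p₀ < 0 := by
    have h := key_ineq q hq0 hq1 p₀ (by omega)
    have hb : T p₀ = c p₀ * (((p₀ : ℕ) : ℝ) * q ^ (p₀ - 1) * (1 - q) + q ^ p₀ - 1) := by
      simp only [hT]; ring
    rw [hb]
    exact mul_neg_of_pos_of_neg hcp₀ (by linarith)
  calc ∑' p, T p < ∑' _ : ℕ, (0:ℝ) :=
        Summable.tsum_lt_tsum hTle hTlt hST summable_zero
  _ = 0 := tsum_zero
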